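/- Let d ≥ 2 be an integer and let λ be a real number with 0 < λ < (1/4)·sin(π/(2d−1)). Let g : ℝ/ℤ → ℝ/ℤ be a map such that any two distinct points t ≠ t′ with g(t) = g(t′) satisfy dist(t, t′) ≥ 1/(2d−1) in the quotient metric of ℝ/ℤ. Define F : (ℝ/ℤ) × D² → (ℝ/ℤ) × ℂ by F(t, z) = (g(t), λ·z + (1/2)·e(t)), where e(t) = exp(2πit) ∈ ℂ (well-defined on ℝ/ℤ) and D² = {z ∈ ℂ : |z| ≤ 1}. Then F is injective, and for all (t, z) ∈ (ℝ/ℤ) × D² one has |λ·z + (1/2)·e(t)| < 1, so F maps (ℝ/ℤ) × D² into (ℝ/ℤ) × int(D²). -/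

import Mathlib

lemma chord_abs (θ : ℝ) :
    ‖Complex.exp (θ * Complex.I) - 1‖ = 2 * |Real.sin (θ / 2)| := by
  rw [Complex.exp_mul_I]
  have h1 : (Complex.cos θ + Complex.sin θ * Complex.I - 1)
      = ((Real.cos θ - 1 : ℝ) : ℂ) + ((Real.sin θ : ℝ) : ℂ) * Complex.I := by
    push_cast; ring
  rw [h1, Complex.norm_def, Complex.normSq_add_mul_I]
  have h2 : |Real.sin (θ / 2)| ^ 2 = (1 - Real.cos θ) / 2 := by
    rw [Real.abs_sin_half, Real.sq_sqrt]
    nlinarith [Real.cos_le_one θ]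
  have h3 : Real.sin θ ^ 2 + Real.cos θ ^ 2 = 1 := Real.sin_sq_add_cos_sq θ
  have h4 : (Real.cos θ - 1) ^ 2 + Real.sin θ ^ 2 = (2 * |Real.sin (θ / 2)|) ^ 2 := by
    rw [mul_pow, h2]; nlinarith
  rw [h4, Real.sqrt_sq (by positivity)]

/-- with 0 < λ < (1/4)·sin(π/(2d−1)) and g : ℝ/ℤ → ℝ/ℤ whose distinct
preimage points are at distance ≥ 1/(2d−1), the map F(t, z) = (g(t), λz + (1/2)e(t))
is injective on (ℝ/ℤ) × D² and maps it into (ℝ/ℤ) × int(D²). -/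
theorem stmt17 (d : ℕ) (hd : 2 ≤ d) (lam : ℝ)
    (hlam0 : 0 < lam)
    (hlam1 : lam < (1 / 4) * Real.sin (Real.pi / (2 * (d : ℝ) - 1)))
    (g : AddCircle (1 : ℝ) → AddCircle (1 : ℝ))
    (hg : ∀ t t' : AddCircle (1 : ℝ), t ≠ t' → g t = g t' →
      1 / (2 * (d : ℝ) - 1) ≤ dist t t')
    (e : AddCircle (1 : ℝ) → ℂ)
    (he : ∀ x : ℝ, e (x : AddCircle (1 : ℝ)) =
      Complex.exp (2 * (Real.pi : ℂ) * Complex.I * (x : ℂ)))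
    (F : AddCircle (1 : ℝ) × ℂ → AddCircle (1 : ℝ) × ℂ)
    (hF : ∀ (t : AddCircle (1 : ℝ)) (z : ℂ),
      F (t, z) = (g t, (lam : ℂ) * z + (1 / 2 : ℂ) * e t)) :
    Set.InjOn F ((Set.univ : Set (AddCircle (1 : ℝ))) ×ˢ {z : ℂ | ‖z‖ ≤ 1}) ∧
    ∀ (t : AddCircle (1 : ℝ)) (z : ℂ), ‖z‖ ≤ 1 →
      ‖(lam : ℂ) * z + (1 / 2 : ℂ) * e t‖ < 1 := by
  have hden : (0 : ℝ) < 2 * (d : ℝ) - 1 := by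
    have : (2 : ℝ) ≤ (d : ℝ) := by exact_mod_cast hd
    linarith
  -- |e t| = 1
  have habs_e : ∀ t : AddCircle (1 : ℝ), ‖e t‖ = 1 := by
    intro t
    induction t using QuotientAddGroup.induction_on with
    | H x =>
      rw [he x, Complex.norm_exp]
      have : (2 * (Real.pi : ℂ) * Complex.I * (x : ℂ)).re = 0 := by simp
      rw [this, Real.exp_zero]
  -- chord length lower bound
  have hchord : ∀ t t' : AddCircle (1 : ℝ), t ≠ t' → g t = g t' →
      2 * Real.sin (Real.pi / (2 * (d : ℝ) - 1)) ≤ ‖e t - e t'‖ := by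
    intro t t' hne hgt
    induction t using QuotientAddGroup.induction_on with
    | H x =>
    induction t' using QuotientAddGroup.induction_on with
    | H y =>
      set n : ℤ := round (x - y) with hn
      set δ : ℝ := x - y - n with hδ
      have hdist : dist (x : AddCircle (1 : ℝ)) (y : AddCircle (1 : ℝ)) = |δ| := by
        rw [dist_eq_norm]
        have : (x : AddCircle (1 : ℝ)) - (y : AddCircle (1 : ℝ)) = ((x - y : ℝ) : AddCircle (1 : ℝ)) := by
          exact (QuotientAddGroup.mk_sub _ _ _).symm
        rw [this, AddCircle.norm_eq]
        simp [hδ, hn]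
      have hD1 : 1 / (2 * (d : ℝ) - 1) ≤ |δ| := hdist ▸ hg _ _ hne hgt
      have hD2 : |δ| ≤ 1 / 2 := by
        have := AddCircle.norm_le_half_period (p := (1 : ℝ))
          (x := ((x - y : ℝ) : AddCircle (1 : ℝ))) one_ne_zero
        have heq : ‖((x - y : ℝ) : AddCircle (1 : ℝ))‖ = |δ| := by
          rw [AddCircle.norm_eq]; simp [hδ, hn]
        rw [heq] at this
        simpa using this
      -- e ↑x - e ↑y = exp(2πiy) * (exp(2πδ i) - 1)
      have hsplit : e (x : AddCircle (1 : ℝ)) - e (y : AddCircle (1 : ℝ))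
          = Complex.exp (2 * (Real.pi : ℂ) * Complex.I * (y : ℂ))
            * (Complex.exp (((2 * Real.pi * δ : ℝ) : ℂ) * Complex.I) - 1) := by
        rw [he x, he y]
        rw [mul_sub, mul_one, ← Complex.exp_add]
        congr 1
        have : (2 * (Real.pi : ℂ) * Complex.I * (x : ℂ))
            = (2 * (Real.pi : ℂ) * Complex.I * (y : ℂ) + ((2 * Real.pi * δ : ℝ) : ℂ) * Complex.I)
              + (n : ℂ) * (2 * (Real.pi : ℂ) * Complex.I) := by
          push_cast [hδ]; ring
        rw [this, Complex.exp_add, Complex.exp_int_mul_two_pi_mul_I, mul_one]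
      have habs : ‖e (x : AddCircle (1 : ℝ)) - e (y : AddCircle (1 : ℝ))‖
          = 2 * |Real.sin (Real.pi * δ)| := by
        rw [hsplit, norm_mul, Complex.norm_exp]
        have h0 : (2 * (Real.pi : ℂ) * Complex.I * (y : ℂ)).re = 0 := by simp
        rw [h0, Real.exp_zero, one_mul, chord_abs]
        ring_nf
      rw [habs]
      have hmono : Real.sin (Real.pi / (2 * (d : ℝ) - 1)) ≤ Real.sin (Real.pi * |δ|) := by
        apply Real.sin_le_sin_of_le_of_le_pi_div_two
        · have h0 : (0:ℝ) ≤ Real.pi / (2 * (d : ℝ) - 1) := by positivity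
          linarith [Real.pi_pos]
        · nlinarith [Real.pi_pos]
        · rw [div_le_iff₀ hden] at hD1 ⊢
          nlinarith [Real.pi_pos]
      have habs_sin : Real.sin (Real.pi * |δ|) ≤ |Real.sin (Real.pi * δ)| := by
        rcases abs_cases δ with ⟨h, _⟩ | ⟨h, _⟩
        · rw [h]; exact le_abs_self _
        · rw [h, mul_neg, Real.sin_neg]; exact neg_le_abs _
      linarith
  constructor
  · rintro ⟨t, z⟩ ⟨-, hz⟩ ⟨t', z'⟩ ⟨-, hz'⟩ heq
    rw [hF, hF] at heq
    have h1 : g t = g t' := (Prod.ext_iff.mp heq).1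
    have h2 : (lam : ℂ) * z + (1 / 2 : ℂ) * e t = (lam : ℂ) * z' + (1 / 2 : ℂ) * e t' :=
      (Prod.ext_iff.mp heq).2
    have htt : t = t' := by
      by_contra hne
      have hlow := hchord t t' hne h1
      have hkey : (1 / 2 : ℂ) * (e t - e t') = (lam : ℂ) * (z' - z) := by
        linear_combination h2
      have := congrArg (‖·‖) hkey
      rw [norm_mul, norm_mul, Complex.norm_real, Real.norm_eq_abs] at this
      have hez : ‖z' - z‖ ≤ 2 := by
        calc ‖z' - z‖ ≤ ‖z'‖ + ‖z‖ := by
              simpa using norm_sub_le z' z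
          _ ≤ 2 := by
              have h1 : ‖z‖ ≤ 1 := hz
              have h2 : ‖z'‖ ≤ 1 := hz'
              linarith
      have h12 : ‖(1 / 2 : ℂ)‖ = 1 / 2 := by
        rw [show (1 / 2 : ℂ) = ((1 / 2 : ℝ) : ℂ) by norm_num, Complex.norm_real, Real.norm_eq_abs]
        norm_num
      rw [h12, abs_of_pos hlam0] at this
      nlinarith [norm_nonneg (z' - z), norm_nonneg (e t - e t')]
    subst htt
    have hzz : z = z' := by
      have : (lam : ℂ) * z = (lam : ℂ) * z' := by linear_combination h2
      have hlne : (lam : ℂ) ≠ 0 := by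
        simpa using (Complex.ofReal_ne_zero.mpr (ne_of_gt hlam0))
      exact mul_left_cancel₀ hlne this
    simp [hzz]
  · intro t z hz
    have hsin1 : Real.sin (Real.pi / (2 * (d : ℝ) - 1)) ≤ 1 := Real.sin_le_one _
    calc ‖(lam : ℂ) * z + (1 / 2 : ℂ) * e t‖
        ≤ ‖(lam : ℂ) * z‖ + ‖(1 / 2 : ℂ) * e t‖ :=
          norm_add_le _ _
      _ = lam * ‖z‖ + (1 / 2) * ‖e t‖ := by
          rw [norm_mul, norm_mul, Complex.norm_real, Real.norm_eq_abs, abs_of_pos hlam0,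
            show (1 / 2 : ℂ) = ((1 / 2 : ℝ) : ℂ) by norm_num, Complex.norm_real, Real.norm_eq_abs]
          norm_num
      _ = lam * ‖z‖ + 1 / 2 := by rw [habs_e t]; ring
      _ < 1 := by nlinarith [norm_nonneg z]
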